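/- Let b > 1 be a real number and define h(p) = 4(1−p)² / ( (4 − 2p + p²)·(1 − bp)² ). Then for all p ∈ (0, 1/b), h(p) > 1 + p(2−p)/(4 − p(2−p)) = 4/(4 − 2p + p²) > 1. Consequently, under a single instance of single-qubit local depolarizing noise, if the cost concentrates exactly as ⟨ΔC̃⟩ = (1 − bp)·⟨ΔC⟩ with b > 1, the average relative resolvability of the optimal Probabilistic Error Cancellation scheme exceeds 1 + p(2−p)/(4 − p(2−p)) for all p ∈ (0, 1/b). -/

import Mathlib

/-- **Probabilistic Error Cancellation with one instance of local depolarizing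
noise, strong-concentration regime** (Appendix D). For `b > 1` and all
`p ∈ (0, 1/b)`, the average relative resolvability
`h(p) = 4(1-p)²/((4-2p+p²)(1-bp)²)` of the optimal PEC scheme exceeds
`1 + p(2-p)/(4 - p(2-p)) = 4/(4-2p+p²) > 1`. -/
theorem pec_local_depolarizing_strong_concentration
    (b : ℝ) (hb : 1 < b) :
    ∀ p : ℝ, 0 < p → p < 1 / b →
      1 + p * (2 - p) / (4 - p * (2 - p)) <
          4 * (1 - p) ^ 2 / ((4 - 2 * p + p ^ 2) * (1 - b * p) ^ 2) ∧
      1 + p * (2 - p) / (4 - p * (2 - p)) = 4 / (4 - 2 * p + p ^ 2) ∧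
      1 < 4 / (4 - 2 * p + p ^ 2) := by
  intro p hp hpb
  have hb0 : (0:ℝ) < b := lt_trans one_pos hb
  have hbp : b * p < 1 := by
    have := (lt_div_iff₀ hb0).mp hpb
    linarith [mul_comm p b ▸ this]
  have hp1 : p < 1 := by nlinarith
  have hq : 0 < 4 - 2 * p + p ^ 2 := by nlinarith
  have hbp0 : 0 < 1 - b * p := by linarith
  have h1p : 0 < 1 - p := by linarith
  have hlt : 1 - b * p < 1 - p := by nlinarith
  have hsq : (1 - b * p) ^ 2 < (1 - p) ^ 2 := by nlinarith
  have heq : 1 + p * (2 - p) / (4 - p * (2 - p)) = 4 / (4 - 2 * p + p ^ 2) := by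
    have : (4:ℝ) - p * (2 - p) = 4 - 2 * p + p ^ 2 := by ring
    rw [this]
    rw [one_add_div hq.ne']
    ring
  refine ⟨?_, heq, ?_⟩
  · rw [heq]
    rw [div_lt_div_iff₀ hq (by positivity)]
    nlinarith [sq_nonneg (1 - b * p)]
  · rw [lt_div_iff₀ hq]; nlinarith
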